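/- (Discrete gradient structure / positive definiteness) Fix $n \geq 2$, let $\sigma_{\min} \in [0,2)$, and let $\{\chi_{n-j}^{(n)}\}_{j=1}^n$ be positive kernels (for each level $m \leq n$). Define auxiliary kernels $\mathbf{a}_0^{(m)} = (2-\sigma_{\min})\chi_0^{(m)}$ and $\mathbf{a}_{m-j}^{(m)} = \chi_{m-j}^{(m)}$ for $1 \leq j \leq m-1$. Assume (1) $\mathbf{a}_{m-j-1}^{(m)} \geq \mathbf{a}_{m-j}^{(m)} > 0$ for $1 \leq j \leq m-1$; (2) $\mathbf{a}_{m-j-1}^{(m-1)} \geq \mathbf{a}_{m-j}^{(m)}$ for $1 \leq j \leq m-1$; (3) $\mathbf{a}_{m-j-2}^{(m-1)} - \mathbf{a}_{m-j-1}^{(m-1)} \geq \mathbf{a}_{m-j-1}^{(m)} - \mathbf{a}_{m-j}^{(m)}$ for $1 \leq j \leq m-2$. Define $Y[\vec{\phi}_m] = \sum_{j=1}^{m-1}(\mathbf{a}_{m-j-1}^{(m)} - \mathbf{a}_{m-j}^{(m)})(\sum_{\ell=j+1}^m \phi_\ell)^2 + \mathbf{a}_{m-1}^{(m)}(\sum_{\ell=1}^m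 \phi_\ell)^2$. Then for any real sequence $\{\phi_k\}_{k=1}^n$: $2\sum_{k=1}^n \phi_k \sum_{j=1}^k \chi_{k-j}^{(k)}\phi_j \geq Y[\vec{\phi}_n] + \sigma_{\min}\sum_{k=1}^n \chi_0^{(k)}\phi_k^2$. -/

import Mathlib

open Finset

/-- The auxiliary kernels: `auxA σ χ m j = 𝐚_j^{(m)}`, equal to `(2-σ)χ_0^{(m)}` for `j = 0`
and to `χ_j^{(m)}` for `j ≥ 1`. -/
noncomputable def auxA (σ : ℝ) (χ : ℕ → ℕ → ℝ) (m j : ℕ) : ℝ :=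
  if j = 0 then (2 - σ) * χ m 0 else χ m j

/-- The quadratic functional `Y[φ⃗_m]`. -/
noncomputable def Yfun (σ : ℝ) (χ : ℕ → ℕ → ℝ) (φ : ℕ → ℝ) (m : ℕ) : ℝ :=
  ∑ j ∈ Finset.Icc 1 (m-1),
      (auxA σ χ m (m-j-1) - auxA σ χ m (m-j)) * (∑ l ∈ Finset.Icc (j+1) m, φ l)^2
    + auxA σ χ m (m-1) * (∑ l ∈ Finset.Icc 1 m, φ l)^2

private lemma tel (f : ℕ → ℝ) (M : ℕ) :
    ∑ j ∈ Finset.Icc 1 M, (f (M-j) - f (M+1-j)) = f 0 - f M := by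
  induction M generalizing f with
  | zero => simp
  | succ N ih =>
    rw [Finset.sum_Icc_succ_top (by omega : 1 ≤ N+1)]
    have e : ∑ j ∈ Finset.Icc 1 N, (f (N+1-j) - f (N+1+1-j))
        = ∑ j ∈ Finset.Icc 1 N, ((f ((N-j)+1)) - (f ((N+1-j)+1))) := by
      refine Finset.sum_congr rfl fun j hj => ?_
      simp only [Finset.mem_Icc] at hj
      congr 2 <;> omega
    rw [e, ih (fun k => f (k+1))]
    norm_num

private lemma abl (f φ : ℕ → ℝ) (M : ℕ) :
    ∑ j ∈ Finset.Icc 1 M, (f (M-j) - f (M+1-j)) * (∑ l ∈ Finset.Icc (j+1) M, φ l)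
      + f M * (∑ l ∈ Finset.Icc 1 M, φ l)
    = ∑ j ∈ Finset.Icc 1 M, f (M+1-j) * φ j := by
  induction M generalizing f with
  | zero => simp
  | succ N ih =>
    rw [Finset.sum_Icc_succ_top (by omega : 1 ≤ N+1),
        Finset.sum_Icc_succ_top (by omega : 1 ≤ N+1),
        Finset.sum_Icc_succ_top (by omega : 1 ≤ N+1)]
    have e : ∑ j ∈ Finset.Icc 1 N, (f (N+1-j) - f (N+1+1-j)) * (∑ l ∈ Finset.Icc (j+1) (N+1), φ l)
        = ∑ j ∈ Finset.Icc 1 N, ((f ((N-j)+1) - f ((N+1-j)+1)) * ((∑ l ∈ Finset.Icc (j+1) N, φ l) + φ (N+1))) := by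
      refine Finset.sum_congr rfl fun j hj => ?_
      simp only [Finset.mem_Icc] at hj
      rw [Finset.sum_Icc_succ_top (by omega : j+1 ≤ N+1)]
      congr 3 <;> omega
    have expand : ∑ j ∈ Finset.Icc 1 N, ((f ((N-j)+1) - f ((N+1-j)+1)) * ((∑ l ∈ Finset.Icc (j+1) N, φ l) + φ (N+1)))
        = (∑ j ∈ Finset.Icc 1 N, (f ((N-j)+1) - f ((N+1-j)+1)) * (∑ l ∈ Finset.Icc (j+1) N, φ l))
          + (∑ j ∈ Finset.Icc 1 N, (f ((N-j)+1) - f ((N+1-j)+1))) * φ (N+1) := by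
      rw [Finset.sum_mul, ← Finset.sum_add_distrib]
      exact Finset.sum_congr rfl fun j hj => by ring
    have e2 : ∑ j ∈ Finset.Icc 1 N, f (N+1+1-j) * φ j = ∑ j ∈ Finset.Icc 1 N, f ((N+1-j)+1) * φ j := by
      refine Finset.sum_congr rfl fun j hj => ?_
      simp only [Finset.mem_Icc] at hj
      congr 2
      omega
    have h0 : N+1-(N+1) = 0 := by omega
    have h1 : N+1+1-(N+1) = 1 := by omega
    have hemp : Finset.Icc (N+1+1) (N+1) = ∅ := Finset.Icc_eq_empty (by omega)
    rw [e, expand, e2, h0, h1, hemp, Finset.sum_empty]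
    have hih := ih (fun k => f (k+1))
    have htel := tel (fun k => f (k+1)) N
    linear_combination hih + φ (N+1) * htel

private lemma key (a φ : ℕ → ℝ) (M : ℕ) :
    ∑ j ∈ Finset.Icc 1 M, (a (M-j) - a (M+1-j)) * (∑ l ∈ Finset.Icc (j+1) (M+1), φ l)^2
      + a M * (∑ l ∈ Finset.Icc 1 (M+1), φ l)^2
    = (∑ j ∈ Finset.Icc 1 M, (a (M-j) - a (M+1-j)) * (∑ l ∈ Finset.Icc (j+1) M, φ l)^2
        + a M * (∑ l ∈ Finset.Icc 1 M, φ l)^2)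
      + φ (M+1) * (2 * ∑ j ∈ Finset.Icc 1 M, a (M+1-j) * φ j + a 0 * φ (M+1)) := by
  have e : ∑ j ∈ Finset.Icc 1 M, (a (M-j) - a (M+1-j)) * (∑ l ∈ Finset.Icc (j+1) (M+1), φ l)^2
      = ∑ j ∈ Finset.Icc 1 M, ((a (M-j) - a (M+1-j)) * (∑ l ∈ Finset.Icc (j+1) M, φ l)^2
          + 2 * φ (M+1) * ((a (M-j) - a (M+1-j)) * (∑ l ∈ Finset.Icc (j+1) M, φ l))
          + φ (M+1)^2 * (a (M-j) - a (M+1-j))) := by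
    refine Finset.sum_congr rfl fun j hj => ?_
    simp only [Finset.mem_Icc] at hj
    rw [Finset.sum_Icc_succ_top (by omega : j+1 ≤ M+1)]
    ring
  have expand : ∑ j ∈ Finset.Icc 1 M, ((a (M-j) - a (M+1-j)) * (∑ l ∈ Finset.Icc (j+1) M, φ l)^2
          + 2 * φ (M+1) * ((a (M-j) - a (M+1-j)) * (∑ l ∈ Finset.Icc (j+1) M, φ l))
          + φ (M+1)^2 * (a (M-j) - a (M+1-j)))
      = ∑ j ∈ Finset.Icc 1 M, (a (M-j) - a (M+1-j)) * (∑ l ∈ Finset.Icc (j+1) M, φ l)^2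
        + 2 * φ (M+1) * ∑ j ∈ Finset.Icc 1 M, (a (M-j) - a (M+1-j)) * (∑ l ∈ Finset.Icc (j+1) M, φ l)
        + φ (M+1)^2 * ∑ j ∈ Finset.Icc 1 M, (a (M-j) - a (M+1-j)) := by
    rw [Finset.sum_add_distrib, Finset.sum_add_distrib, Finset.mul_sum, Finset.mul_sum]
  rw [e, expand, Finset.sum_Icc_succ_top (by omega : 1 ≤ M+1)]
  linear_combination (2 * φ (M+1)) * abl a φ M + (φ (M+1)^2) * tel a M

/-- The remainder term `Y_R`. -/
noncomputable def YR (σ : ℝ) (χ : ℕ → ℕ → ℝ) (φ : ℕ → ℝ) (M : ℕ) : ℝ :=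
  ∑ j ∈ Finset.Icc 1 (M-1),
      (auxA σ χ M (M-j-1) - auxA σ χ M (M-j) - auxA σ χ (M+1) (M-j) + auxA σ χ (M+1) (M+1-j))
        * (∑ l ∈ Finset.Icc (j+1) M, φ l)^2
    + (auxA σ χ M (M-1) - auxA σ χ (M+1) M) * (∑ l ∈ Finset.Icc 1 M, φ l)^2

private lemma ident (σ : ℝ) (χ : ℕ → ℕ → ℝ) (φ : ℕ → ℝ) (M : ℕ) :
    2 * (φ (M+1) * ∑ j ∈ Finset.Icc 1 (M+1), χ (M+1) (M+1-j) * φ j)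
    = Yfun σ χ φ (M+1) - Yfun σ χ φ M + σ * (χ (M+1) 0 * φ (M+1)^2) + YR σ χ φ M := by
  -- e1 : Yfun M - YR M as a single sum
  have hsum : ∑ j ∈ Finset.Icc 1 (M-1),
        ((auxA σ χ M (M-j-1) - auxA σ χ M (M-j)) * (∑ l ∈ Finset.Icc (j+1) M, φ l)^2
          - (auxA σ χ M (M-j-1) - auxA σ χ M (M-j) - auxA σ χ (M+1) (M-j) + auxA σ χ (M+1) (M+1-j))
              * (∑ l ∈ Finset.Icc (j+1) M, φ l)^2)
      = ∑ j ∈ Finset.Icc 1 (M-1),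
          (auxA σ χ (M+1) (M-j) - auxA σ χ (M+1) (M+1-j)) * (∑ l ∈ Finset.Icc (j+1) M, φ l)^2 :=
    Finset.sum_congr rfl fun j hj => by ring
  rw [Finset.sum_sub_distrib] at hsum
  have e1 : Yfun σ χ φ M - YR σ χ φ M
      = ∑ j ∈ Finset.Icc 1 (M-1),
          (auxA σ χ (M+1) (M-j) - auxA σ χ (M+1) (M+1-j)) * (∑ l ∈ Finset.Icc (j+1) M, φ l)^2
        + auxA σ χ (M+1) M * (∑ l ∈ Finset.Icc 1 M, φ l)^2 := by
    simp only [Yfun, YR]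
    linear_combination hsum
  have e2 : ∑ j ∈ Finset.Icc 1 M,
        (auxA σ χ (M+1) (M-j) - auxA σ χ (M+1) (M+1-j)) * (∑ l ∈ Finset.Icc (j+1) M, φ l)^2
      = ∑ j ∈ Finset.Icc 1 (M-1),
          (auxA σ χ (M+1) (M-j) - auxA σ χ (M+1) (M+1-j)) * (∑ l ∈ Finset.Icc (j+1) M, φ l)^2 := by
    cases M with
    | zero => rfl
    | succ N =>
      rw [show N+1-1 = N from rfl, Finset.sum_Icc_succ_top (by omega : 1 ≤ N+1),
        Finset.Icc_eq_empty (by omega : ¬ (N+1+1 ≤ N+1)), Finset.sum_empty]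
      ring
  have e3 : Yfun σ χ φ (M+1)
      = ∑ j ∈ Finset.Icc 1 M,
          (auxA σ χ (M+1) (M-j) - auxA σ χ (M+1) (M+1-j)) * (∑ l ∈ Finset.Icc (j+1) (M+1), φ l)^2
        + auxA σ χ (M+1) M * (∑ l ∈ Finset.Icc 1 (M+1), φ l)^2 := by
    simp only [Yfun, Nat.add_sub_cancel]
    congr 1
    refine Finset.sum_congr rfl fun j hj => ?_
    congr 3
    omega
  have big : Yfun σ χ φ (M+1)
      = (Yfun σ χ φ M - YR σ χ φ M)
        + φ (M+1) * (2 * ∑ j ∈ Finset.Icc 1 M, auxA σ χ (M+1) (M+1-j) * φ j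
            + auxA σ χ (M+1) 0 * φ (M+1)) := by
    rw [e3, key (auxA σ χ (M+1)) φ M, e2, ← e1]
  have e4 : ∑ j ∈ Finset.Icc 1 (M+1), χ (M+1) (M+1-j) * φ j
      = ∑ j ∈ Finset.Icc 1 M, auxA σ χ (M+1) (M+1-j) * φ j + χ (M+1) 0 * φ (M+1) := by
    rw [Finset.sum_Icc_succ_top (by omega : 1 ≤ M+1), Nat.sub_self]
    congr 1
    refine Finset.sum_congr rfl fun j hj => ?_
    simp only [Finset.mem_Icc] at hj
    rw [auxA, if_neg (by omega)]
  have ha0 : auxA σ χ (M+1) 0 = (2 - σ) * χ (M+1) 0 := by rw [auxA, if_pos rfl]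
  rw [e4, big, ha0]
  ring

private lemma YRnn (σ : ℝ) (χ : ℕ → ℕ → ℝ) (φ : ℕ → ℝ) (M : ℕ)
    (h2' : ∀ j, 1 ≤ j → j ≤ M → auxA σ χ M (M+1-j-1) ≥ auxA σ χ (M+1) (M+1-j))
    (h3' : ∀ j, 1 ≤ j → j ≤ M-1 →
      auxA σ χ M (M+1-j-2) - auxA σ χ M (M+1-j-1) ≥
        auxA σ χ (M+1) (M+1-j-1) - auxA σ χ (M+1) (M+1-j)) :
    0 ≤ YR σ χ φ M := by
  cases M with
  | zero => simp [YR]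
  | succ N =>
    unfold YR
    apply add_nonneg
    · apply Finset.sum_nonneg
      intro j hj
      simp only [Finset.mem_Icc] at hj
      apply mul_nonneg _ (sq_nonneg _)
      have h := h3' j hj.1 (by omega)
      have i1 : N+1+1-j-2 = N+1-j-1 := by omega
      have i2 : N+1+1-j-1 = N+1-j := by omega
      rw [i1, i2] at h
      linarith
    · apply mul_nonneg _ (sq_nonneg _)
      have h := h2' 1 le_rfl (by omega)
      have i1 : N+1+1-1-1 = N+1-1 := by omega
      have i2 : N+1+1-1 = N+1 := by omega
      rw [i1, i2] at h
      linarith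

theorem stmt_17 (n : ℕ) (hn : 2 ≤ n) (σ : ℝ) (hσ : σ ∈ Set.Ico (0:ℝ) 2)
    (χ : ℕ → ℕ → ℝ)
    (hχpos : ∀ m, 1 ≤ m → m ≤ n → ∀ j, j ≤ m - 1 → 0 < χ m j)
    (h1 : ∀ m, 1 ≤ m → m ≤ n → ∀ j, 1 ≤ j → j ≤ m - 1 →
      auxA σ χ m (m-j-1) ≥ auxA σ χ m (m-j) ∧ 0 < auxA σ χ m (m-j))
    (h2 : ∀ m, 2 ≤ m → m ≤ n → ∀ j, 1 ≤ j → j ≤ m - 1 →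
      auxA σ χ (m-1) (m-j-1) ≥ auxA σ χ m (m-j))
    (h3 : ∀ m, 2 ≤ m → m ≤ n → ∀ j, 1 ≤ j → j ≤ m - 2 →
      auxA σ χ (m-1) (m-j-2) - auxA σ χ (m-1) (m-j-1) ≥
        auxA σ χ m (m-j-1) - auxA σ χ m (m-j)) :
    ∀ φ : ℕ → ℝ,
      2 * ∑ k ∈ Finset.Icc 1 n, φ k * ∑ j ∈ Finset.Icc 1 k, χ k (k-j) * φ j ≥
        Yfun σ χ φ n + σ * ∑ k ∈ Finset.Icc 1 n, χ k 0 * (φ k)^2 := by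
  intro φ
  have main : ∀ N, N ≤ n →
      2 * ∑ k ∈ Finset.Icc 1 N, φ k * ∑ j ∈ Finset.Icc 1 k, χ k (k-j) * φ j ≥
        Yfun σ χ φ N + σ * ∑ k ∈ Finset.Icc 1 N, χ k 0 * (φ k)^2 := by
    intro N
    induction N with
    | zero =>
      intro _
      simp [Yfun]
    | succ K ihK =>
      intro hKn
      have hK := ihK (by omega)
      have hid := ident σ χ φ K
      have hYR : 0 ≤ YR σ χ φ K := by
        apply YRnn
        · intro j hj1 hj2
          have h := h2 (K+1) (by omega) (by omega) j hj1 (by omega)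
          have i1 : K+1-1 = K := by omega
          rw [i1] at h
          exact h
        · intro j hj1 hj2
          have h := h3 (K+1) (by omega) (by omega) j hj1 (by omega)
          have i1 : K+1-1 = K := by omega
          rw [i1] at h
          exact h
      have g1 : ∑ k ∈ Finset.Icc 1 (K+1), φ k * ∑ j ∈ Finset.Icc 1 k, χ k (k-j) * φ j
          = (∑ k ∈ Finset.Icc 1 K, φ k * ∑ j ∈ Finset.Icc 1 k, χ k (k-j) * φ j)
            + φ (K+1) * ∑ j ∈ Finset.Icc 1 (K+1), χ (K+1) (K+1-j) * φ j :=
        Finset.sum_Icc_succ_top (by omega) _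
      have g2 : ∑ k ∈ Finset.Icc 1 (K+1), χ k 0 * (φ k)^2
          = (∑ k ∈ Finset.Icc 1 K, χ k 0 * (φ k)^2) + χ (K+1) 0 * (φ (K+1))^2 :=
        Finset.sum_Icc_succ_top (by omega) _
      rw [g1, g2]
      linarith [hK, hid, hYR]
  exact main n le_rfl
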